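/- For any parametric trace τ and any parameter instance θ : X ⇀ V, the trace slice of τ by θ equals the trace slice of τ by max (θ]_{Θ_τ}, i.e., τ↾θ = τ↾(max (θ]_{Θ_τ}); here max (θ]_{Θ_τ} exists because Θ_τ is lub closed. -/
import Mathlib


/- Partial functions X ⇀ V are modeled as functions `X → Option V`. -/

variable {X V E : Type*}

/-- `θ` is less informative than `θ'` (θ ⊑ θ'): wherever `θ` is defined, `θ'` is
defined with the same value. -/
def PFle (θ θ' : X → Option V) : Prop :=
  ∀ x v, θ x = some v → θ' x = some v

/-- The everywhere-undefined partial function ⊥. -/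
def pbot : X → Option V := fun _ => none

/-- `θ'` is an upper bound of the set `Θ` of partial functions. -/
def IsUB (Θ : Set (X → Option V)) (θ' : X → Option V) : Prop :=
  ∀ θ ∈ Θ, PFle θ θ'

/-- `θ'` is the least upper bound (⊔Θ) of the set `Θ` of partial functions. -/
def IsLubPF (Θ : Set (X → Option V)) (θ' : X → Option V) : Prop :=
  IsUB Θ θ' ∧ ∀ θ'', IsUB Θ θ'' → PFle θ' θ''

/-- Θ is lub closed: every subset of Θ admitting an upper bound has its lub in Θ. -/
def LubClosed (Θ : Set (X → Option V)) : Prop :=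
  ∀ Θ' ⊆ Θ, ∀ u, IsLubPF Θ' u → u ∈ Θ

/-- The lub closure of Θ: the intersection of all lub closed sets including Θ. -/
def lubClosure (Θ : Set (X → Option V)) : Set (X → Option V) :=
  ⋂₀ {Θ' | Θ ⊆ Θ' ∧ LubClosed Θ'}

/-- (θ]_Θ : the elements of Θ that are less informative than θ. -/
def below (θ : X → Option V) (Θ : Set (X → Option V)) : Set (X → Option V) :=
  {θ'' ∈ Θ | PFle θ'' θ}

/-- A parametric event is a pair e⟨θ⟩; a parametric trace is a finite list of
parametric events. Θ_τ is the lub closure of the parameter instances occurring in τ. -/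
def ThetaOf (τ : List (E × (X → Option V))) : Set (X → Option V) :=
  lubClosure {θ | ∃ e : E, (e, θ) ∈ τ}

/-- The θ-trace traceSlice τ↾θ : keep (in order) the base events of τ whose parameter
instance is ⊑ θ, dropping the parameter instances. -/
noncomputable def traceSlice (τ : List (E × (X → Option V))) (θ : X → Option V) :
    List E :=
  (τ.filter fun p => @decide (PFle p.2 θ) (Classical.propDecidable _)).map Prod.fst


lemma lubClosed_lubClosure (Θ : Set (X → Option V)) : LubClosed (lubClosure Θ) := by
  intro Θ' hsub u hu T hT
  exact hT.2 Θ' (fun x hx => hsub hx T hT) u hu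

lemma subset_lubClosure (Θ : Set (X → Option V)) : Θ ⊆ lubClosure Θ := by
  intro x hx T hT
  exact hT.1 hx

/-- Slicing with less: τ↾θ = τ↾(max (θ]_{Θ_τ}), where the maximum of (θ]_{Θ_τ}
exists since Θ_τ is lub closed. -/
theorem stmt16 (τ : List (E × (X → Option V))) (θ : X → Option V) :
    ∃ m, (m ∈ below θ (ThetaOf τ) ∧ ∀ q ∈ below θ (ThetaOf τ), PFle q m) ∧
      traceSlice τ θ = traceSlice τ m := by
  classical
  set S := below θ (ThetaOf τ) with hS
  set m : X → Option V := fun x => if ∃ s ∈ S, (s x).isSome then θ x else none with hm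
  have hmle : PFle m θ := by
    intro x v hx
    simp only [hm] at hx
    split_ifs at hx with h
    · exact hx
  have hub : ∀ s ∈ S, PFle s m := by
    intro s hs x v hx
    have hsθ : PFle s θ := hs.2
    have hθx : θ x = some v := hsθ x v hx
    have hex : ∃ s' ∈ S, (s' x).isSome := ⟨s, hs, by rw [hx]; rfl⟩
    simp only [hm, if_pos hex]
    exact hθx
  have hlub : IsLubPF S m := by
    refine ⟨hub, ?_⟩
    intro t ht x v hx
    simp only [hm] at hx
    split_ifs at hx with h
    · obtain ⟨s, hs, hsome⟩ := h
      obtain ⟨w, hw⟩ := Option.isSome_iff_exists.mp hsome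
      have : θ x = some w := hs.2 x w hw
      rw [this] at hx
      injection hx with h2
      subst h2
      exact ht s hs x w hw
  have hmem : m ∈ ThetaOf τ :=
    lubClosed_lubClosure _ S (fun s hs => hs.1) m hlub
  refine ⟨m, ⟨⟨hmem, hmle⟩, hub⟩, ?_⟩
  unfold traceSlice
  congr 1
  apply List.filter_congr
  intro p hp
  have hbase : p.2 ∈ ThetaOf τ :=
    subset_lubClosure _ ⟨p.1, by simpa using hp⟩
  simp only [decide_eq_decide]
  constructor
  · intro h; exact hub p.2 ⟨hbase, h⟩
  · intro h x v hx; exact hmle x v (h x v hx)
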